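/- For every real d ≥ 3 and every real k ≥ 1, the function y ↦ (k + 1 − y)·(d^y − 1)/(d − 1) is strictly increasing on the closed interval [0, k]. -/

import Mathlib

/-- Claim 1 of the paper: for real `d ≥ 3` and `k ≥ 1`, the function
`y ↦ (k + 1 − y)·(d^y − 1)/(d − 1)` is strictly increasing on `[0, k]`. -/
theorem stmt_4 (d k : ℝ) (hd : 3 ≤ d) (hk : 1 ≤ k) :
    StrictMonoOn (fun y : ℝ => (k + 1 - y) * (d ^ y - 1) / (d - 1)) (Set.Icc 0 k) := by
  have hd0 : (0 : ℝ) < d := by linarith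
  have hd1 : (0 : ℝ) < d - 1 := by linarith
  have hlog : 1 < Real.log d := by
    rw [Real.lt_log_iff_exp_lt hd0]
    have := Real.exp_one_lt_d9
    linarith
  have hder : ∀ x : ℝ, HasDerivAt (fun y : ℝ => (k + 1 - y) * (d ^ y - 1))
      ((-1) * (d ^ x - 1) + (k + 1 - x) * (d ^ x * Real.log d)) x := by
    intro x
    have h1 : HasDerivAt (fun y : ℝ => k + 1 - y) (-1) x := by
      simpa [Pi.sub_def] using (hasDerivAt_const x (k + 1)).sub (hasDerivAt_id x)
    have h2 : HasDerivAt (fun y : ℝ => d ^ y - 1) (d ^ x * Real.log d) x :=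
      ((Real.hasStrictDerivAt_const_rpow hd0 x).hasDerivAt).sub_const 1
    simpa [Pi.mul_def] using h1.mul h2
  have hg : StrictMonoOn (fun y : ℝ => (k + 1 - y) * (d ^ y - 1)) (Set.Icc 0 k) := by
    apply strictMonoOn_of_deriv_pos (convex_Icc 0 k)
    · exact fun x _ => (hder x).continuousAt.continuousWithinAt
    · intro x hx
      rw [interior_Icc] at hx
      rw [(hder x).deriv]
      have hx0 := hx.1
      have hxk := hx.2
      have hpow : (1 : ℝ) ≤ d ^ x := Real.one_le_rpow (by linarith) (le_of_lt hx0)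
      have h1 : (1 : ℝ) < k + 1 - x := by linarith
      have hpos : (0 : ℝ) < d ^ x := by linarith
      have key : d ^ x < (k + 1 - x) * (d ^ x * Real.log d) := by
        have : d ^ x * 1 < d ^ x * ((k + 1 - x) * Real.log d) := by
          apply mul_lt_mul_of_pos_left _ hpos
          nlinarith
        nlinarith
      nlinarith
  intro x hx y hy hxy
  have := hg hx hy hxy
  simp only [div_lt_div_iff_of_pos_right hd1]
  exact this
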